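/- arXiv:1608.04913 — 2 statements merged into one kernel-verified Lean document; each statement's English description precedes it below -/
import Mathlib

section
/- (Gale–Stewart, closed determinacy) Let X be a nonempty set and let A ⊆ X^ℕ be closed in the product topology (where X is discrete). In the infinite game where Player 1 and Player 2 alternate choosing elements of X (Player 1 first) and Player 2 wins iff the resulting sequence lies in A, one of the two players has a winning strategy. -/
universe u
open Classical

namespace GS

variable {X : Type u}

def pre (f : ℕ → X) (n : ℕ) : List X := List.ofFn (fun i : Fin n => f i)

@[simp] lemma length_pre (f : ℕ → X) (n : ℕ) : (pre f n).length = n := by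
  simp [pre]

lemma pre_succ (f : ℕ → X) (n : ℕ) : pre f (n + 1) = pre f n ++ [f n] := by
  rw [pre, List.ofFn_succ', List.concat_eq_append]
  simp [pre]

inductive WT (T : List X → Prop) : List X → Type u
  | base (p : List X) : ¬ T p → WT T p
  | pone (p : List X) (x : X) : Even p.length → WT T (p ++ [x]) → WT T p
  | ptwo (p : List X) : ¬ Even p.length → (∀ x : X, WT T (p ++ [x])) → WT T p

noncomputable def height {T : List X → Prop} : ∀ {p : List X}, WT T p → Ordinal.{u}
  | _, .base _ _ => 0
  | _, .pone _ _ _ d => Order.succ (height d)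
  | _, .ptwo _ _ d => Order.succ (⨆ x, height (d x))

noncomputable def rk (T : List X → Prop) (p : List X) : Ordinal.{u} :=
  sInf (Set.range (height (T := T) (p := p)))

lemma rk_le {T : List X → Prop} {p : List X} (d : WT T p) : rk T p ≤ height d :=
  csInf_le' ⟨d, rfl⟩

lemma rk_attained {T : List X → Prop} {p : List X} (h : Nonempty (WT T p)) :
    ∃ d : WT T p, height d = rk T p := by
  have : (Set.range (height (T := T) (p := p))).Nonempty := Set.range_nonempty _
  obtain ⟨d, hd⟩ := csInf_mem this
  exact ⟨d, hd⟩

end GS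

namespace GS
variable {X : Type u}

/-- At a Player-1 position still in the tree with a winning derivation,
there is a move strictly decreasing the rank. -/
lemma stepP1 {T : List X → Prop} {p : List X} (h : Nonempty (WT T p))
    (hT : T p) (he : Even p.length) :
    ∃ x : X, Nonempty (WT T (p ++ [x])) ∧ rk T (p ++ [x]) < rk T p := by
  obtain ⟨d, hd⟩ := rk_attained h
  cases d with
  | base _ h' => exact absurd hT h'
  | pone _ x _ d' =>
      refine ⟨x, ⟨d'⟩, lt_of_le_of_lt (rk_le d') ?_⟩
      rw [← hd]
      exact Order.lt_succ _
  | ptwo _ ho _ => exact absurd he ho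

/-- At a Player-2 position still in the tree with a winning derivation,
every move strictly decreases the rank. -/
lemma stepP2 {T : List X → Prop} {p : List X} (h : Nonempty (WT T p))
    (hT : T p) (ho : ¬ Even p.length) :
    ∀ x : X, Nonempty (WT T (p ++ [x])) ∧ rk T (p ++ [x]) < rk T p := by
  obtain ⟨d, hd⟩ := rk_attained h
  cases d with
  | base _ h' => exact absurd hT h'
  | pone _ x he _ => exact absurd he ho
  | ptwo _ _ d' =>
      intro x
      have h1 : rk T (p ++ [x]) ≤ ⨆ y, height (d' y) :=
        le_trans (rk_le (d' x)) (le_ciSup (Ordinal.bddAbove_range _) x)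
      refine ⟨⟨d' x⟩, lt_of_le_of_lt h1 ?_⟩
      rw [← hd]
      exact Order.lt_succ _

lemma not_wt_of_not_T {T : List X → Prop} {p : List X} (h : ¬ Nonempty (WT T p)) : T p :=
  by_contra fun hT => h ⟨.base p hT⟩

lemma not_wt_stepP1 {T : List X → Prop} {p : List X} (h : ¬ Nonempty (WT T p))
    (he : Even p.length) : ∀ x : X, ¬ Nonempty (WT T (p ++ [x])) := by
  intro x hx
  obtain ⟨d⟩ := hx
  exact h ⟨.pone p x he d⟩

lemma not_wt_stepP2 {T : List X → Prop} {p : List X} (h : ¬ Nonempty (WT T p))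
    (ho : ¬ Even p.length) : ∃ x : X, ¬ Nonempty (WT T (p ++ [x])) := by
  by_contra hc
  push_neg at hc
  exact h ⟨.ptwo p ho fun x => Classical.choice (hc x)⟩

end GS

namespace GS
variable {X : Type u}

/-- The tree of finite sequences consistent with some element of `A`. -/
def tr (A : Set (ℕ → X)) (s : List X) : Prop := ∃ g ∈ A, pre g s.length = s

lemma pre_eq_iff {f g : ℕ → X} {n : ℕ} : pre g n = pre f n ↔ ∀ i < n, g i = f i := by
  constructor
  · intro h i hi
    have := congrArg (fun l => l[i]?) h
    simpa [pre, List.getElem?_ofFn, hi] using this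
  · intro h
    unfold pre
    congr 1
    funext i
    exact h i i.isLt

lemma mem_of_tr {X : Type u} [TopologicalSpace X] [DiscreteTopology X]
    {A : Set (ℕ → X)} (hA : IsClosed A) {f : ℕ → X}
    (h : ∀ n, tr A (pre f n)) : f ∈ A := by
  rw [← hA.closure_eq]
  rw [mem_closure_iff_nhds]
  intro t ht
  rw [nhds_pi] at ht
  obtain ⟨I, hIfin, u, hu, hsub⟩ := Filter.mem_pi.1 ht
  obtain ⟨n, hn⟩ : ∃ n : ℕ, ∀ i ∈ I, i < n := by
    obtain ⟨m, hm⟩ := hIfin.bddAbove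
    exact ⟨m + 1, fun i hi => Nat.lt_succ_of_le (hm hi)⟩
  obtain ⟨g, hgA, hg⟩ := h n
  rw [length_pre] at hg
  refine ⟨g, hsub fun i hi => ?_, hgA⟩
  have : g i = f i := pre_eq_iff.1 hg i (hn i hi)
  rw [this]
  have := hu i
  rwa [nhds_discrete, Filter.mem_pure] at this

end GS


namespace GS
variable {X : Type u}

/-- If Player 1 plays rank-decreasing moves, the rank strictly decreases at every
round of a play that stays inside the tree. -/
lemma p1_step {T : List X → Prop} [Nonempty X] {σ : List X → X} {f : ℕ → X}
    (hσ : σ = fun p => if h : ∃ x, Nonempty (WT T (p ++ [x])) ∧ rk T (p ++ [x]) < rk T p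
      then h.choose else Classical.arbitrary X)
    (hfσ : ∀ n, Even n → f n = σ (pre f n))
    (htr : ∀ n, T (pre f n)) (n : ℕ) (hn : Nonempty (WT T (pre f n))) :
    Nonempty (WT T (pre f (n + 1))) ∧ rk T (pre f (n + 1)) < rk T (pre f n) := by
  rcases Nat.even_or_odd n with he | ho
  · obtain ⟨x, hx⟩ := stepP1 hn (htr n) (by rw [length_pre]; exact he)
    have hex : ∃ x, Nonempty (WT T (pre f n ++ [x])) ∧
        rk T (pre f n ++ [x]) < rk T (pre f n) := ⟨x, hx⟩
    have hfn : f n = σ (pre f n) := hfσ n he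
    rw [pre_succ, hfn, hσ]
    simp only [dif_pos hex]
    exact hex.choose_spec
  · have := stepP2 hn (htr n)
      (by rw [length_pre]; exact Nat.not_even_iff_odd.mpr ho) (f n)
    rw [pre_succ]
    exact this

end GS

/-- The play `f` follows strategy `σ` for Player 1 (who moves at even rounds). -/
def FollowsP1 {X : Type*} (σ : List X → X) (f : ℕ → X) : Prop :=
  ∀ n : ℕ, f (2 * n) = σ (List.ofFn (fun i : Fin (2 * n) => f i))

/-- The play `f` follows strategy `σ` for Player 2 (who moves at odd rounds). -/
def FollowsP2 {X : Type*} (σ : List X → X) (f : ℕ → X) : Prop :=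
  ∀ n : ℕ, f (2 * n + 1) = σ (List.ofFn (fun i : Fin (2 * n + 1) => f i))


/-- Gale–Stewart: closed games are determined (X discrete, `ℕ → X` with the
product topology; Player 2 wins iff the play lies in the closed set `A`). -/
theorem stmt1 {X : Type*} [Nonempty X] [TopologicalSpace X] [DiscreteTopology X]
    (A : Set (ℕ → X)) (hA : IsClosed A) :
    (∃ σ : List X → X, ∀ f : ℕ → X, FollowsP1 σ f → f ∉ A) ∨
    (∃ σ : List X → X, ∀ f : ℕ → X, FollowsP2 σ f → f ∈ A) := by
  classical
  set T := GS.tr A with hT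
  by_cases hW : Nonempty (GS.WT T [])
  · -- Player 1 wins
    left
    set σ : List X → X := fun p =>
      if h : ∃ x, Nonempty (GS.WT T (p ++ [x])) ∧ GS.rk T (p ++ [x]) < GS.rk T p
      then h.choose else Classical.arbitrary X with hσ
    refine ⟨σ, fun f hf hfA => ?_⟩
    have hfσ : ∀ n, Even n → f n = σ (GS.pre f n) := by
      intro n hn
      obtain ⟨k, hk⟩ := hn
      have := hf k
      rw [show 2 * k = n by omega] at this
      exact this
    have htr : ∀ n, T (GS.pre f n) := fun n => ⟨f, hfA, by rw [GS.length_pre]⟩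
    have hW' : ∀ n, Nonempty (GS.WT T (GS.pre f n)) := by
      intro n
      induction n with
      | zero => exact hW
      | succ n ih => exact (GS.p1_step hσ hfσ htr n ih).1
    have hdec : ∀ n, GS.rk T (GS.pre f (n + 1)) < GS.rk T (GS.pre f n) :=
      fun n => (GS.p1_step hσ hfσ htr n (hW' n)).2
    -- no infinite descending sequence of ordinals
    set g : ℕ → Ordinal := fun n => GS.rk T (GS.pre f n) with hg
    have hwf : WellFounded ((· < ·) : Ordinal → Ordinal → Prop) := wellFounded_lt
    obtain ⟨k, hk⟩ := hwf.min_mem (Set.range g) ⟨g 0, Set.mem_range_self 0⟩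
    exact hwf.not_lt_min (Set.range g)
      (Set.mem_range_self (k + 1)) (by rw [← hk]; exact hdec k)
  · -- Player 2 wins
    right
    set σ : List X → X := fun p =>
      if h : ∃ x, ¬ Nonempty (GS.WT T (p ++ [x])) then h.choose
      else Classical.arbitrary X with hσ
    refine ⟨σ, fun f hf => ?_⟩
    have hfσ : ∀ n, ¬ Even n → f n = σ (GS.pre f n) := by
      intro n hn
      obtain ⟨k, hk⟩ := Nat.not_even_iff_odd.mp hn
      have := hf k
      rw [show 2 * k + 1 = n by omega] at this
      exact this
    have hW' : ∀ n, ¬ Nonempty (GS.WT T (GS.pre f n)) := by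
      intro n
      induction n with
      | zero => exact hW
      | succ n ih =>
        rcases Nat.even_or_odd n with he | ho
        · rw [GS.pre_succ]
          exact GS.not_wt_stepP1 ih (by rw [GS.length_pre]; exact he) (f n)
        · have hex := GS.not_wt_stepP2 ih
            (by rw [GS.length_pre]; exact Nat.not_even_iff_odd.mpr ho)
          have hfn : f n = σ (GS.pre f n) := hfσ n (Nat.not_even_iff_odd.mpr ho)
          rw [GS.pre_succ, hfn, hσ]
          simp only [dif_pos hex]
          exact hex.choose_spec
    exact GS.mem_of_tr hA fun n => GS.not_wt_of_not_T (hW' n)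
end

section
/- Assume there is a well-ordering of the reals (e.g. full AC). Then there exists an equivalence relation E on Baire space ℕ → ℕ such that every equivalence class of E has at most two elements, and for every perfect subset P of Baire space there exist distinct x, y ∈ P with x E y (so E admits no perfect set of pairwise inequivalent elements). -/
open Cardinal Ordinal Set Function

namespace Stmt2Aux

noncomputable section

abbrev BS := ℕ → ℕ

lemma card_BS : #BS = 𝔠 := by
  rw [show BS = (ℕ → ℕ) from rfl, mk_arrow]
  simp [aleph0_power_aleph0]

lemma le_card_of_perfect {P : Set BS} (hP : Perfect P) (hne : P.Nonempty) : 𝔠 ≤ #P := by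
  letI := TopologicalSpace.upgradeIsCompletelyMetrizable BS
  obtain ⟨f, hr, -, hinj⟩ := hP.exists_nat_bool_injection hne
  have : #(ℕ → Bool) ≤ #P :=
    mk_le_of_injective (f := fun x => (⟨f x, hr ⟨x, rfl⟩⟩ : P))
      fun a b h => hinj (congrArg Subtype.val h)
  refine le_trans (le_of_eq ?_) this
  rw [mk_arrow, Cardinal.lift_id, Cardinal.lift_id, mk_bool, mk_nat, two_power_aleph0]

lemma exists_pair (P u : Set BS) (hP : 𝔠 ≤ #P) (hu : #u < 𝔠) :
    ∃ p : BS × BS, p.1 ∈ P ∧ p.2 ∈ P ∧ p.1 ≠ p.2 ∧ p.1 ∉ u ∧ p.2 ∉ u := by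
  have h1 : 1 < #(P \ u : Set BS) := by
    by_contra h
    push_neg at h
    have hsub : P ⊆ (P \ u) ∪ u := fun x hx => by
      by_cases hxu : x ∈ u
      · exact Or.inr hxu
      · exact Or.inl ⟨hx, hxu⟩
    have : #P ≤ #(P \ u : Set BS) + #u :=
      le_trans (mk_le_mk_of_subset hsub) (mk_union_le _ _)
    have hlt : #(P \ u : Set BS) + #u < 𝔠 :=
      add_lt_of_lt aleph0_le_continuum (lt_of_le_of_lt h (one_lt_aleph0.trans aleph0_lt_continuum)) hu
    exact absurd (lt_of_le_of_lt (hP.trans this) hlt) (lt_irrefl _)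
  rw [Cardinal.one_lt_iff_nontrivial] at h1
  obtain ⟨⟨a, ha⟩, ⟨b, hb⟩, hab⟩ := h1
  exact ⟨(a, b), ha.1, hb.1, fun h => hab (Subtype.ext h), ha.2, hb.2⟩

/-- index type of size continuum whose initial segments are small -/
abbrev Idx : Type := (Cardinal.continuum.{0}).ord.ToType

lemma card_Iio_lt (t : Idx) : #(Iio t) < 𝔠 :=
  Cardinal.mk_Iio_ord_toType t

def usedOf (t : Idx) (ih : ∀ s, s < t → BS × BS) : Set BS :=
  (range fun s : Iio t => (ih s s.2).1) ∪ (range fun s : Iio t => (ih s s.2).2)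

lemma card_usedOf (t : Idx) (ih : ∀ s, s < t → BS × BS) : #(usedOf t ih) < 𝔠 := by
  refine lt_of_le_of_lt (le_trans (mk_union_le _ _) (add_le_add mk_range_le mk_range_le)) ?_
  exact add_lt_of_lt aleph0_le_continuum (card_Iio_lt t) (card_Iio_lt t)

variable (g : Idx → Set BS) (hg : ∀ t, 𝔠 ≤ #(g t))

def F (t : Idx) (ih : ∀ s, s < t → BS × BS) : BS × BS :=
  (exists_pair (g t) (usedOf t ih) (hg t) (card_usedOf t ih)).choose

def pick : Idx → BS × BS :=
  (wellFounded_lt (α := Idx)).fix (F g hg)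

lemma pick_eq (t : Idx) : pick g hg t = F g hg t (fun s _ => pick g hg s) :=
  WellFounded.fix_eq _ _ _

lemma pick_spec (t : Idx) :
    (pick g hg t).1 ∈ g t ∧ (pick g hg t).2 ∈ g t ∧ (pick g hg t).1 ≠ (pick g hg t).2 ∧
      (pick g hg t).1 ∉ usedOf t (fun s _ => pick g hg s) ∧
      (pick g hg t).2 ∉ usedOf t (fun s _ => pick g hg s) := by
  rw [pick_eq]
  unfold F
  exact (exists_pair (g t) (usedOf t fun s _ => pick g hg s) (hg t)
    (card_usedOf t fun s _ => pick g hg s)).choose_spec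

lemma pick_mem_used {s t : Idx} (h : s < t) :
    (pick g hg s).1 ∈ usedOf t (fun s _ => pick g hg s) ∧
      (pick g hg s).2 ∈ usedOf t (fun s _ => pick g hg s) :=
  ⟨Or.inl ⟨⟨s, h⟩, rfl⟩, Or.inr ⟨⟨s, h⟩, rfl⟩⟩

lemma pick_disjoint {s t : Idx} (h : s ≠ t) :
    (pick g hg t).1 ≠ (pick g hg s).1 ∧ (pick g hg t).1 ≠ (pick g hg s).2 ∧
      (pick g hg t).2 ≠ (pick g hg s).1 ∧ (pick g hg t).2 ≠ (pick g hg s).2 := by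
  rcases h.lt_or_gt with hlt | hlt
  · have hu := pick_mem_used g hg hlt
    have hs := pick_spec g hg t
    exact ⟨fun e => hs.2.2.2.1 (e ▸ hu.1), fun e => hs.2.2.2.1 (e ▸ hu.2),
      fun e => hs.2.2.2.2 (e ▸ hu.1), fun e => hs.2.2.2.2 (e ▸ hu.2)⟩
  · have hu := pick_mem_used g hg hlt
    have hs := pick_spec g hg s
    exact ⟨fun e => hs.2.2.2.1 (e.symm ▸ hu.1), fun e => hs.2.2.2.2 (e.symm ▸ hu.1),
      fun e => hs.2.2.2.1 (e.symm ▸ hu.2), fun e => hs.2.2.2.2 (e.symm ▸ hu.2)⟩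

lemma idx_unique {t t' : Idx} {y : BS}
    (h : y = (pick g hg t).1 ∨ y = (pick g hg t).2)
    (h' : y = (pick g hg t').1 ∨ y = (pick g hg t').2) : t = t' := by
  by_contra hne
  have hd := pick_disjoint g hg (s := t') (t := t) (Ne.symm hne)
  rcases h with rfl | rfl <;> rcases h' with h' | h'
  · exact hd.1 h'
  · exact hd.2.1 h'
  · exact hd.2.2.1 h'
  · exact hd.2.2.2 h'

lemma card_S : #{P : Set BS // Perfect P ∧ P.Nonempty} ≤ 𝔠 := by
  obtain ⟨b, hbc, -, hb⟩ := TopologicalSpace.exists_countable_basis BS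
  have hinj : Injective fun P : {P : Set BS // Perfect P ∧ P.Nonempty} =>
      ({s : b | (s : Set BS) ⊆ (P : Set BS)ᶜ} : Set b) := by
    intro P Q h
    have hP := hb.open_eq_sUnion' P.2.1.closed.isOpen_compl
    have hQ := hb.open_eq_sUnion' Q.2.1.closed.isOpen_compl
    have hsets : {s : Set BS | s ∈ b ∧ s ⊆ (P : Set BS)ᶜ}
        = {s : Set BS | s ∈ b ∧ s ⊆ (Q : Set BS)ᶜ} := by
      ext s
      constructor
      · rintro ⟨hsb, hss⟩
        exact ⟨hsb, Set.ext_iff.mp h ⟨s, hsb⟩ |>.mp hss⟩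
      · rintro ⟨hsb, hss⟩
        exact ⟨hsb, Set.ext_iff.mp h ⟨s, hsb⟩ |>.mpr hss⟩
    have : (P : Set BS)ᶜ = (Q : Set BS)ᶜ := by rw [hP, hQ, hsets]
    exact Subtype.ext (compl_injective this)
  have h1 : #{P : Set BS // Perfect P ∧ P.Nonempty} ≤ #(Set b) := mk_le_of_injective hinj
  refine h1.trans ?_
  rw [mk_set]
  calc (2 : Cardinal) ^ #b ≤ 2 ^ ℵ₀ :=
        power_le_power_left (by norm_num) (by
          have : Countable b := hbc
          exact mk_le_aleph0)
    _ = 𝔠 := rfl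

end

end Stmt2Aux

open Stmt2Aux Cardinal Set Function in
/-- (Under AC / a well-ordering of the reals) there is a thin equivalence relation
on Baire space all of whose classes have at most two elements: every nonempty
perfect set contains two distinct equivalent elements. -/
theorem stmt2 :
    ∃ E : (ℕ → ℕ) → (ℕ → ℕ) → Prop, Equivalence E ∧
      (∀ x, ∃ a b, {y | E x y} ⊆ {a, b}) ∧
      (∀ P : Set (ℕ → ℕ), Perfect P → P.Nonempty →
        ∃ x ∈ P, ∃ y ∈ P, x ≠ y ∧ E x y) := by
  by_cases hS : Nonempty {P : Set BS // Perfect P ∧ P.Nonempty}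
  · -- there is a surjection from Idx onto the perfect sets
    have hcard : #{P : Set BS // Perfect P ∧ P.Nonempty} ≤ #Idx := by
      rw [Cardinal.mk_ord_toType]; exact card_S
    obtain ⟨f⟩ := Cardinal.le_def _ _ |>.mp hcard
    have hfsurj : Surjective (invFun (⇑f)) := invFun_surjective f.injective
    set g : Idx → Set BS := fun t => ((invFun (⇑f) t).1 : Set BS) with hgdef
    have hg : ∀ t, 𝔠 ≤ #(g t) := fun t =>
      le_card_of_perfect (invFun (⇑f) t).2.1 (invFun (⇑f) t).2.2
    set a : Idx → BS := fun t => (pick g hg t).1 with ha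
    set b : Idx → BS := fun t => (pick g hg t).2 with hb
    refine ⟨fun x y => x = y ∨ ∃ t, (x = a t ∧ y = b t) ∨ (x = b t ∧ y = a t), ⟨?_, ?_, ?_⟩, ?_, ?_⟩
    · exact fun x => Or.inl rfl
    · rintro x y (rfl | ⟨t, ⟨rfl, rfl⟩ | ⟨rfl, rfl⟩⟩)
      · exact Or.inl rfl
      · exact Or.inr ⟨t, Or.inr ⟨rfl, rfl⟩⟩
      · exact Or.inr ⟨t, Or.inl ⟨rfl, rfl⟩⟩
    · rintro x y z hxy hyz
      rcases hxy with rfl | ⟨t, hxy⟩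
      · exact hyz
      rcases hyz with rfl | ⟨t', hyz⟩
      · exact Or.inr ⟨t, hxy⟩
      have htt : t = t' := by
        apply idx_unique g hg (y := y)
        · rcases hxy with ⟨_, rfl⟩ | ⟨_, rfl⟩
          · exact Or.inr rfl
          · exact Or.inl rfl
        · rcases hyz with ⟨rfl, _⟩ | ⟨rfl, _⟩
          · exact Or.inl rfl
          · exact Or.inr rfl
      subst htt
      have hne := (pick_spec g hg t).2.2.1
      rcases hxy with ⟨rfl, rfl⟩ | ⟨rfl, rfl⟩ <;>
        rcases hyz with ⟨h1, h2⟩ | ⟨h1, h2⟩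
      · exact absurd h1 (Ne.symm hne)
      · exact Or.inl h2.symm
      · exact Or.inl h2.symm
      · exact absurd h1 hne
    · intro x
      by_cases hx : ∃ t, x = a t ∨ x = b t
      · obtain ⟨t, hxt⟩ := hx
        refine ⟨a t, b t, ?_⟩
        rintro y (rfl | ⟨t', hy⟩)
        · rcases hxt with rfl | rfl
          · exact Or.inl rfl
          · exact Or.inr rfl
        · have : t' = t := by
            apply idx_unique g hg (y := x)
            · rcases hy with ⟨rfl, _⟩ | ⟨rfl, _⟩
              · exact Or.inl rfl
              · exact Or.inr rfl
            · exact hxt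
          subst this
          rcases hy with ⟨_, rfl⟩ | ⟨_, rfl⟩
          · exact Or.inr rfl
          · exact Or.inl rfl
      · refine ⟨x, x, ?_⟩
        rintro y (rfl | ⟨t, ⟨hx1, _⟩ | ⟨hx1, _⟩⟩)
        · exact Or.inl rfl
        · exact absurd ⟨t, Or.inl hx1⟩ hx
        · exact absurd ⟨t, Or.inr hx1⟩ hx
    · intro P hP hne
      obtain ⟨t, ht⟩ := hfsurj ⟨P, hP, hne⟩
      have hgt : g t = P := by
        show ((invFun (⇑f) t).1 : Set BS) = P
        rw [ht]
      have hs := pick_spec g hg t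
      exact ⟨a t, hgt ▸ hs.1, b t, hgt ▸ hs.2.1, hs.2.2.1, Or.inr ⟨t, Or.inl ⟨rfl, rfl⟩⟩⟩
  · refine ⟨Eq, eq_equivalence, fun x => ⟨x, x, ?_⟩, fun P hP hne => absurd ⟨⟨P, hP, hne⟩⟩ hS⟩
    rintro y rfl
    exact Or.inl rfl
end
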